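/- Let V be a finite type, let D and S be subsets of V, and let f : V → V be a function that is injective on D (for all x, y ∈ D, f(x) = f(y) implies x = y) and satisfies f(x) ∉ S for all x ∈ D. For s ∈ S, let t(s) denote the least natural number m such that f^[m](s) ∉ D (which exists). Then Σ_{s ∈ S} t(s) ≤ |V| − |S|. (In particular, the average of t(s) over s ∈ S is at most (|V| − |S|)/|S|.) -/

import Mathlib

/-- `p` is a period of the vector `s = (s_1, …, s_n)` (0-indexed here):
`s_i = s_{i+p}` for all valid indices. -/
def IsPeriod {α : Type*} {n : ℕ} (s : Fin n → α) (p : ℕ) : Prop :=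
  ∀ i : ℕ, ∀ h : i + p < n,
    s ⟨i, lt_of_le_of_lt (Nat.le_add_right i p) h⟩ = s ⟨i + p, h⟩

/-- The window of length `ℓ` of `s` starting at (0-indexed) position `i`. -/
def window {α : Type*} {n : ℕ} (s : Fin n → α) (i ℓ : ℕ) (h : i + ℓ ≤ n) :
    Fin ℓ → α :=
  fun j => s ⟨i + j, Nat.lt_of_lt_of_le (Nat.add_lt_add_left j.isLt i) h⟩

/-- `s` is an `ℓ`-window `p`-least-period avoiding vector: no window of
length `ℓ` has any period `p'` with `1 ≤ p' < p`. -/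
def LPAvoiding {α : Type*} {n : ℕ} (ℓ p : ℕ) (s : Fin n → α) : Prop :=
  ∀ i : ℕ, ∀ h : i + ℓ ≤ n, ∀ p', 1 ≤ p' → p' < p →
    ¬ IsPeriod (window s i ℓ h) p'

/-- `s` is an `ℓ`-window `p`-period avoiding vector: no window of
length `ℓ` has period `p`. -/
def PAvoiding {α : Type*} {n : ℕ} (ℓ p : ℕ) (s : Fin n → α) : Prop :=
  ∀ i : ℕ, ∀ h : i + ℓ ≤ n, ¬ IsPeriod (window s i ℓ h) p

/-- `s` satisfies the `k`-RLL constraint w.r.t. the zero symbol `z`: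
no window of length `k` consists entirely of `z`. -/
def RLLok {α : Type*} {n : ℕ} (z : α) (k : ℕ) (s : Fin n → α) : Prop :=
  ∀ i : ℕ, ∀ h : i + k ≤ n, ∃ j : Fin k, window s i k h j ≠ z

/-- Abstract average-iteration bound: if `f` is injective on `D` and maps `D`
outside of `S`, and `t s` is the least `m` with `f^[m] s ∉ D`, then
`Σ_{s ∈ S} t(s) ≤ |V| − |S|`. -/
theorem repair_iteration_sum_bound
    {V : Type*} [Fintype V] (D : Set V) (S : Finset V) (f : V → V)
    (hinj : ∀ x ∈ D, ∀ y ∈ D, f x = f y → x = y)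
    (hS : ∀ x ∈ D, f x ∉ S)
    (t : V → ℕ)
    (ht : ∀ s ∈ S, f^[t s] s ∉ D ∧ ∀ m < t s, f^[m] s ∈ D) :
    ∑ s ∈ S, t s ≤ Fintype.card V - S.card := by
  classical
  have cancel : ∀ k : ℕ, ∀ x y : V, (∀ j < k, f^[j] x ∈ D) → (∀ j < k, f^[j] y ∈ D) →
      f^[k] x = f^[k] y → x = y := by
    intro k
    induction k with
    | zero => intro x y _ _ h; simpa using h
    | succ k ih =>
      intro x y hx hy h
      apply ih x y (fun j hj => hx j (hj.trans (Nat.lt_succ_self k)))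
        (fun j hj => hy j (hj.trans (Nat.lt_succ_self k)))
      have hx' : f^[k] x ∈ D := hx k (Nat.lt_succ_self k)
      have hy' : f^[k] y ∈ D := hy k (Nat.lt_succ_self k)
      exact hinj _ hx' _ hy' (by simpa [Function.iterate_succ_apply'] using h)
  have key : ∀ s ∈ S, ∀ s' ∈ S, ∀ m m' : ℕ, m < t s → m' < t s' → m ≤ m' →
      f^[m+1] s = f^[m'+1] s' → s = s' ∧ m = m' := by
    intro s hs s' hs' m m' hm hm' hle heq
    have hts := ht s hs; have hts' := ht s' hs'
    have hrw : f^[m'+1] s' = f^[m+1] (f^[m'-m] s') := by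
      rw [← Function.iterate_add_apply]
      congr 1
      omega
    have hcanc : s = f^[m'-m] s' := by
      apply cancel (m+1) s (f^[m'-m] s')
      · intro j hj; exact hts.2 j (by omega)
      · intro j hj
        rw [← Function.iterate_add_apply]
        exact hts'.2 _ (by omega)
      · rw [heq, hrw]
    rcases Nat.eq_or_lt_of_le hle with h | h
    · subst h
      simp only [Nat.sub_self, Function.iterate_zero_apply] at hcanc
      exact ⟨hcanc, rfl⟩
    · exfalso
      have hsplit : f^[m'-m] s' = f (f^[m'-m-1] s') := by
        conv_lhs => rw [show m' - m = (m' - m - 1) + 1 from by omega]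
        rw [Function.iterate_succ_apply']
      have hD : f^[m'-m-1] s' ∈ D := hts'.2 _ (by omega)
      apply hS _ hD
      rw [← hsplit, ← hcanc]
      exact hs
  have hcard : ∑ s ∈ S, t s = (S.sigma fun s => Finset.range (t s)).card := by
    rw [Finset.card_sigma]; simp
  rw [hcard]
  have hle := Finset.card_le_card_of_injOn (f := fun p : Σ _ : V, ℕ => f^[p.2+1] p.1)
    (s := S.sigma fun s => Finset.range (t s)) (t := Sᶜ) ?_ ?_
  · calc (S.sigma fun s => Finset.range (t s)).card ≤ Sᶜ.card := hle
      _ = Fintype.card V - S.card := by rw [Finset.card_compl]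
  · rintro ⟨s, m⟩ hp
    simp only [Finset.mem_coe, Finset.mem_sigma, Finset.mem_range] at hp
    have hD := (ht s hp.1).2 m hp.2
    simp only [Finset.mem_coe, Finset.mem_compl, Function.iterate_succ_apply']
    exact hS _ hD
  · rintro ⟨s, m⟩ hp ⟨s', m'⟩ hp' heq
    simp only [Finset.mem_sigma, Finset.mem_range, Finset.mem_coe] at hp hp'
    simp only at heq
    rcases le_total m m' with h | h
    · obtain ⟨h1, h2⟩ := key s hp.1 s' hp'.1 m m' hp.2 hp'.2 h heq
      simp [h1, h2]
    · obtain ⟨h1, h2⟩ := key s' hp'.1 s hp.1 m' m hp'.2 hp.2 h heq.symm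
      simp [h1, h2]
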